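/- Let G be a finite connected simple graph with maximum degree Δ ≥ 1, and let ε be a real number with 0 ≤ ε and ε·Δ < 1. Then the relative-excitability dynamics R_ε started from the configuration in which a single vertex s is excited and every other vertex is resting satisfies, for every time t ≥ 0 and vertex v: v is excited at time t iff dist(s,v) = t, and v is refractory at time t iff t ≥ 1 and dist(s,v) = t − 1. (For excitability thresholds below the reciprocal of the maximum degree, the relative rule produces classical circular excitation waves.) -/
import Mathlib


/-- The three states of an excitable automaton node. -/
inductive GHState where
  | resting : GHState
  | excited : GHState
  | refractory : GHState
deriving DecidableEq

open GHState

/-- Number of excited neighbours of `v` in configuration `c`. -/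
def excitedCount {V : Type*} (G : SimpleGraph V) [Fintype V] [DecidableRel G.Adj]
    (c : V → GHState) (v : V) : ℕ :=
  ((G.neighborFinset v).filter (fun u => c u = excited)).card

/-- Greenberg–Hastings update map `F_S`: a resting vertex becomes excited iff its
number of excited neighbours lies in `S`; an excited vertex becomes refractory;
a refractory vertex becomes resting. -/
def ghStep {V : Type*} (G : SimpleGraph V) [Fintype V] [DecidableRel G.Adj]
    (S : Set ℕ) [DecidablePred (· ∈ S)] (c : V → GHState) : V → GHState :=
  fun v =>
    match c v with
    | resting => if excitedCount G c v ∈ S then excited else resting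
    | excited => refractory
    | refractory => resting

open scoped Classical in
/-- Relative-excitability update map `R_ε`: a resting vertex `v` becomes excited iff
`σ(v)/d(v) > ε`, where `σ(v)` is its number of excited neighbours and `d(v)` its
degree; an excited vertex becomes refractory; a refractory vertex becomes resting. -/
noncomputable def relStep {V : Type*} (G : SimpleGraph V) [Fintype V] [DecidableRel G.Adj]
    (ε : ℝ) (c : V → GHState) : V → GHState :=
  fun v =>
    match c v with
    | resting =>
        if (excitedCount G c v : ℝ) / (G.degree v : ℝ) > ε then excited else resting
    | excited => refractory
    | refractory => resting

lemma deg_pos' {V : Type*} (G : SimpleGraph V) [Fintype V] [DecidableRel G.Adj]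
    (hconn : G.Connected) (hΔ : 1 ≤ G.maxDegree) (v : V) : 0 < G.degree v := by
  have : Nonempty V := hconn.nonempty
  obtain ⟨u, hu⟩ := G.exists_maximal_degree_vertex
  have p := (hconn v u).some
  cases p with
  | nil => omega
  | cons h r => exact (G.degree_pos_iff_exists_adj _).mpr ⟨_, h⟩

lemma exists_adj_dist' {V : Type*} (G : SimpleGraph V) (hconn : G.Connected)
    {s v : V} {t : ℕ} (h : G.dist s v = t + 1) : ∃ u, G.Adj u v ∧ G.dist s u = t := by
  obtain ⟨q, hq⟩ := (hconn v s).exists_walk_length_eq_dist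
  rw [SimpleGraph.dist_comm, h] at hq
  cases q with
  | nil => simp at hq
  | @cons _ w _ hadj r =>
    refine ⟨w, hadj.symm, ?_⟩
    have h1 : G.dist s w ≤ t := by
      have := SimpleGraph.dist_le r
      simp at hq
      rw [SimpleGraph.dist_comm]; omega
    have h2 : G.dist w v = 1 := SimpleGraph.dist_eq_one_iff_adj.mpr hadj.symm
    have h3 := hconn.dist_triangle (u := s) (v := w) (w := v)
    omega

lemma excitedCount_pos_iff' {V : Type*} (G : SimpleGraph V) [Fintype V] [DecidableRel G.Adj]
    (c : V → GHState) (v : V) :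
    0 < excitedCount G c v ↔ ∃ u, G.Adj v u ∧ c u = excited := by
  simp [excitedCount, Finset.card_pos, Finset.filter_nonempty_iff,
    SimpleGraph.mem_neighborFinset]

lemma cond_iff' {V : Type*} (G : SimpleGraph V) [Fintype V] [DecidableRel G.Adj]
    (ε : ℝ) (hε0 : 0 ≤ ε) (hεΔ : ε * (G.maxDegree : ℝ) < 1) {v : V}
    (hd : 0 < G.degree v) (σ : ℕ) :
    (σ : ℝ) / (G.degree v : ℝ) > ε ↔ 0 < σ := by
  constructor
  · intro h
    by_contra hσ
    push_neg at hσ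
    interval_cases σ
    simp at h
    exact absurd h (not_lt.mpr hε0)
  · intro hσ
    have hΔpos : (0 : ℝ) < (G.maxDegree : ℝ) := by
      have h0 := G.degree_le_maxDegree v
      have : 0 < G.maxDegree := lt_of_lt_of_le hd h0
      exact_mod_cast this
    have hdR : (0 : ℝ) < (G.degree v : ℝ) := by exact_mod_cast hd
    have h1 : ε < 1 / (G.maxDegree : ℝ) := by
      rw [lt_div_iff₀ hΔpos]; exact hεΔ
    have h2 : 1 / (G.maxDegree : ℝ) ≤ (σ : ℝ) / (G.degree v : ℝ) := by
      gcongr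
      · exact_mod_cast hσ
      · exact_mod_cast G.degree_le_maxDegree v
    linarith


/-- For excitability thresholds below the reciprocal of the maximum degree
(`0 ≤ ε` and `ε·Δ < 1`), the relative-excitability dynamics `R_ε` started from a
single excited vertex `s` produces the classical circular excitation wave:
at time `t` a vertex is excited iff its distance from `s` is `t`, and refractory

iff `t ≥ 1` and its distance from `s` is `t - 1`. -/
theorem relative_small_threshold_circular_wave {V : Type*} (G : SimpleGraph V)
    [Fintype V] [DecidableEq V] [DecidableRel G.Adj]
    (hconn : G.Connected) (hΔ : 1 ≤ G.maxDegree)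
    (ε : ℝ) (hε0 : 0 ≤ ε) (hεΔ : ε * (G.maxDegree : ℝ) < 1) (s : V) :
    ∀ t : ℕ, ∀ v : V,
      ((relStep G ε)^[t] (fun u => if u = s then excited else resting) v = excited
        ↔ G.dist s v = t) ∧
      ((relStep G ε)^[t] (fun u => if u = s then excited else resting) v = refractory
        ↔ 1 ≤ t ∧ G.dist s v = t - 1) := by
  intro t
  induction t with
  | zero =>
    intro v
    constructor
    · simp only [Function.iterate_zero, id]
      by_cases hv : v = s
      · subst hv; simp [SimpleGraph.dist_self]
      · simp only [if_neg hv]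
        constructor
        · intro h; exact absurd h (by simp)
        · intro h
          exact absurd ((hconn.dist_eq_zero_iff).mp h).symm hv
    · simp only [Function.iterate_zero, id]
      constructor
      · intro h
        by_cases hv : v = s <;> simp [hv] at h
      · intro h; omega
  | succ t ih =>
    intro v
    rw [Function.iterate_succ_apply']
    set c := (relStep G ε)^[t] (fun u => if u = s then excited else resting) with hc
    have hdeg := deg_pos' G hconn hΔ v
    cases hcv : c v with
    | excited =>
      have hd : G.dist s v = t := (ih v).1.mp hcv
      constructor
      · simp only [relStep, hcv]
        constructor
        · intro h; exact absurd h (by simp)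
        · intro h; omega
      · simp only [relStep, hcv]
        constructor
        · intro _; exact ⟨by omega, by omega⟩
        · intro _; trivial
    | refractory =>
      obtain ⟨ht1, hd⟩ := (ih v).2.mp hcv
      constructor
      · simp only [relStep, hcv]
        constructor
        · intro h; exact absurd h (by simp)
        · intro h; omega
      · simp only [relStep, hcv]
        constructor
        · intro h; exact absurd h (by simp)
        · intro h; omega
    | resting =>
      have hne : G.dist s v ≠ t := fun h => by
        have := (ih v).1.mpr h; rw [hcv] at this; exact absurd this (by simp)
      have hnr : ¬(1 ≤ t ∧ G.dist s v = t - 1) := fun h => by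
        have := (ih v).2.mpr h; rw [hcv] at this; exact absurd this (by simp)
      have hcond : ((excitedCount G c v : ℝ) / (G.degree v : ℝ) > ε)
          ↔ G.dist s v = t + 1 := by
        rw [cond_iff' G ε hε0 hεΔ hdeg, excitedCount_pos_iff']
        constructor
        · rintro ⟨u, hadj, hu⟩
          have hdu : G.dist s u = t := (ih u).1.mp hu
          have h1 : G.dist u v = 1 := SimpleGraph.dist_eq_one_iff_adj.mpr hadj.symm
          have h2 := hconn.dist_triangle (u := s) (v := u) (w := v)
          have h3 : G.dist v u = 1 := SimpleGraph.dist_eq_one_iff_adj.mpr hadj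
          have h4 := hconn.dist_triangle (u := s) (v := v) (w := u)
          omega
        · intro h
          obtain ⟨u, hadj, hdu⟩ := exists_adj_dist' G hconn h
          exact ⟨u, hadj.symm, (ih u).1.mpr hdu⟩
      by_cases hifc : (excitedCount G c v : ℝ) / (G.degree v : ℝ) > ε
      · have hd : G.dist s v = t + 1 := hcond.mp hifc
        constructor
        · simp only [relStep, hcv, if_pos hifc]
          exact ⟨fun _ => hd, fun _ => trivial⟩
        · simp only [relStep, hcv, if_pos hifc]
          constructor
          · intro h; exact absurd h (by simp)
          · intro h; omega
      · have hd : G.dist s v ≠ t + 1 := fun h => hifc (hcond.mpr h)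
        constructor
        · simp only [relStep, hcv, if_neg hifc]
          constructor
          · intro h; exact absurd h (by simp)
          · intro h; exact absurd h hd
        · simp only [relStep, hcv, if_neg hifc]
          constructor
          · intro h; exact absurd h (by simp)
          · intro h; omega
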